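/- In the Baumslag-Solitar group H = ⟨a, b | b⁻¹ a b = a²⟩, the intersection of the cyclic subgroup generated by a and the cyclic subgroup generated by b is trivial. -/

import Mathlib

/-- The single relator `b⁻¹ a b * a⁻²` of the Baumslag–Solitar group BS(1,2),
with generators `a = FreeGroup.of 0`, `b = FreeGroup.of 1`. -/
def bsRels : Set (FreeGroup (Fin 2)) :=
  {(FreeGroup.of 1)⁻¹ * FreeGroup.of 0 * FreeGroup.of 1 * (FreeGroup.of 0 ^ 2)⁻¹}

/-- The Baumslag–Solitar group `H = ⟨a, b ∣ b⁻¹ a b = a²⟩`. -/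
abbrev BS12 : Type := PresentedGroup bsRels

noncomputable def bsA : BS12 := PresentedGroup.of 0
noncomputable def bsB : BS12 := PresentedGroup.of 1

/-- The permutation `x ↦ x + 1` of ℚ. -/
def aPerm : Equiv.Perm ℚ := Equiv.addRight 1

/-- The permutation `x ↦ x / 2` of ℚ. -/
noncomputable def bPerm : Equiv.Perm ℚ :=
  Equiv.mulRight₀ (2⁻¹ : ℚ) (by norm_num)

noncomputable def bsF : Fin 2 → Equiv.Perm ℚ := ![aPerm, bPerm]

lemma bsF_rel : ∀ r ∈ bsRels, FreeGroup.lift bsF r = 1 := by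
  intro r hr
  simp only [bsRels, Set.mem_singleton_iff] at hr
  subst hr
  simp only [map_mul, map_inv, map_pow, FreeGroup.lift_apply_of]
  rw [mul_inv_eq_one]
  ext x
  simp [bsF, aPerm, bPerm, Equiv.Perm.mul_apply, Equiv.Perm.inv_def,
    Equiv.mulRight₀_symm_apply]
  ring

noncomputable def bsPhi : BS12 →* Equiv.Perm ℚ :=
  PresentedGroup.toGroup bsF_rel

lemma aPerm_apply (x : ℚ) : aPerm x = x + 1 := rfl

lemma aPerm_inv_apply (x : ℚ) : aPerm⁻¹ x = x - 1 := by
  rw [Equiv.Perm.inv_eq_iff_eq, aPerm_apply]; ring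

lemma aPerm_zpow (m : ℤ) : ∀ x : ℚ, (aPerm ^ m) x = x + m := by
  induction m using Int.induction_on with
  | zero => simp
  | succ k ih =>
      intro x
      rw [zpow_add_one, Equiv.Perm.mul_apply, aPerm_apply, ih]
      push_cast; ring
  | pred k ih =>
      intro x
      rw [zpow_sub_one, Equiv.Perm.mul_apply, aPerm_inv_apply, ih]
      push_cast; ring

lemma bPerm_zero : bPerm 0 = 0 := by simp [bPerm]

lemma bPerm_inv_zero : bPerm⁻¹ 0 = 0 := by
  rw [Equiv.Perm.inv_eq_iff_eq, bPerm_zero]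

lemma bPerm_zpow_zero (n : ℤ) : (bPerm ^ n) 0 = 0 := by
  induction n using Int.induction_on with
  | zero => simp
  | succ k ih => rw [zpow_add_one, Equiv.Perm.mul_apply, bPerm_zero, ih]
  | pred k ih => rw [zpow_sub_one, Equiv.Perm.mul_apply, bPerm_inv_zero, ih]

theorem stmt_5 : Subgroup.zpowers bsA ⊓ Subgroup.zpowers bsB = ⊥ := by
  rw [eq_bot_iff]
  rintro x ⟨⟨m, hm⟩, ⟨n, hn⟩⟩
  have hA : bsPhi bsA = aPerm := PresentedGroup.toGroup.of bsF_rel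
  have hB : bsPhi bsB = bPerm := PresentedGroup.toGroup.of bsF_rel
  have h1 : bsPhi x = aPerm ^ m := by rw [← hm, map_zpow, hA]
  have h2 : bsPhi x = bPerm ^ n := by rw [← hn, map_zpow, hB]
  have h3 : (aPerm ^ m) 0 = (bPerm ^ n) 0 := by rw [← h1, ← h2]
  rw [aPerm_zpow m 0, bPerm_zpow_zero, zero_add] at h3
  have hm0 : m = 0 := by exact_mod_cast h3
  subst hm0
  simp only [zpow_zero] at hm
  simp [← hm, Subgroup.mem_bot]
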